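/- Let x and y be real polynomials of degree at most k such that ∫_a^b (x′(t) − y(t))·φ(t) dt = 0 for every real polynomial φ of degree at most k−1, where x′ is the derivative of x. Then x′(t_i) = y(t_i) at every Gauss point t_i of (a,b), i = 1, …, k. (Scalar version of Lemma 5.3/Lemma 3.9 of Bause et al., the pointwise collocation property at Gauss points.) -/

import Mathlib

open Polynomial intervalIntegral MeasureTheory

/-- Pointwise collocation property at Gauss points: if the weak relation
`∫ (x' - y) φ = 0` holds for all test polynomials of degree at most `k-1`,
then `x' = y` at every Gauss point of `(a,b)` (scalar version of Lemma 5.3). -/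
theorem collocation_at_gauss_points (k : ℕ) (hk : 1 ≤ k) (a b : ℝ) (hab : a < b)
    (q : Polynomial ℝ) (hmonic : q.Monic) (hdeg : q.natDegree = k)
    (horth : ∀ p : Polynomial ℝ, p.natDegree < k → ∫ s in a..b, q.eval s * p.eval s = 0)
    (t : Fin k → ℝ) (htmono : StrictMono t) (htmem : ∀ i, t i ∈ Set.Ioo a b)
    (htroot : ∀ i, q.eval (t i) = 0)
    (x y : Polynomial ℝ) (hx : x.natDegree ≤ k) (hy : y.natDegree ≤ k)
    (hweak : ∀ φ : Polynomial ℝ, φ.natDegree < k →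
      ∫ s in a..b, ((Polynomial.derivative x).eval s - y.eval s) * φ.eval s = 0) :
    ∀ i, (Polynomial.derivative x).eval (t i) = y.eval (t i) := by
  set r : Polynomial ℝ := Polynomial.derivative x - y with hr
  have hq1 : q ≠ 1 := by
    intro h; rw [h] at hdeg; simp at hdeg; omega
  set c : Polynomial ℝ := r /ₘ q with hc
  set s : Polynomial ℝ := r %ₘ q with hs
  have hsdeg : s.natDegree < k := by
    rw [← hdeg]; exact Polynomial.natDegree_modByMonic_lt r hmonic hq1
  have hrdeg : r.natDegree ≤ k := by
    have h1 : (Polynomial.derivative x).natDegree ≤ x.natDegree - 1 :=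
      Polynomial.natDegree_derivative_le x
    have h2 : r.natDegree ≤ max (Polynomial.derivative x).natDegree y.natDegree :=
      Polynomial.natDegree_sub_le _ _
    have := le_max_iff.mp h2
    omega
  have hcdeg : c.natDegree = 0 := by
    rw [hc, Polynomial.natDegree_divByMonic r hmonic, hdeg]
    omega
  have hdecomp : r = q * c + s := by
    rw [hc, hs]; rw [add_comm]; exact (Polynomial.modByMonic_add_div r q).symm
  -- key: ∫ s φ = 0 for deg φ < k
  have hkey : ∀ φ : Polynomial ℝ, φ.natDegree < k →
      ∫ u in a..b, s.eval u * φ.eval u = 0 := by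
    intro φ hφ
    have h1 := hweak φ hφ
    have hcφ : (c * φ).natDegree < k := by
      calc (c * φ).natDegree ≤ c.natDegree + φ.natDegree := Polynomial.natDegree_mul_le
        _ < k := by omega
    have h2 := horth (c * φ) hcφ
    have heval : ∀ u : ℝ, (Polynomial.derivative x).eval u - y.eval u
        = q.eval u * c.eval u + s.eval u := by
      intro u
      have : r.eval u = (q * c + s).eval u := by rw [← hdecomp]
      simpa [hr] using this
    have hint1 : IntervalIntegrable (fun u => q.eval u * (c * φ).eval u) volume a b :=
      (q.continuous.mul (c * φ).continuous).intervalIntegrable a b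
    have hint2 : IntervalIntegrable (fun u => s.eval u * φ.eval u) volume a b :=
      (s.continuous.mul φ.continuous).intervalIntegrable a b
    have hsplit : (∫ u in a..b, ((Polynomial.derivative x).eval u - y.eval u) * φ.eval u)
        = (∫ u in a..b, q.eval u * (c * φ).eval u) + ∫ u in a..b, s.eval u * φ.eval u := by
      rw [← intervalIntegral.integral_add hint1 hint2]
      apply intervalIntegral.integral_congr
      intro u _
      simp only [heval u, Polynomial.eval_mul]
      ring
    rw [hsplit, h2, zero_add] at h1
    exact h1
  -- apply with φ = s : ∫ s² = 0
  have hs2 : ∫ u in a..b, s.eval u * s.eval u = 0 := hkey s hsdeg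
  -- conclude s = 0
  have hszero : s = 0 := by
    by_contra hne
    have hnonneg : (0 : ℝ → ℝ) ≤ᵐ[volume.restrict (Set.Ioc a b)]
        fun u => s.eval u * s.eval u :=
      Filter.Eventually.of_forall (fun u => by simpa using mul_self_nonneg (s.eval u))
    have hint : IntervalIntegrable (fun u => s.eval u * s.eval u) volume a b :=
      (s.continuous.mul s.continuous).intervalIntegrable a b
    have hae := (intervalIntegral.integral_eq_zero_iff_of_le_of_nonneg_ae hab.le
      hnonneg hint).mp hs2
    -- the zero set of s on Ioc a b has full measure, but s ≠ 0 has finitely many roots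
    have hnull : volume {u ∈ Set.Ioc a b | s.eval u * s.eval u ≠ 0} = 0 := by
      have := MeasureTheory.ae_restrict_iff' (μ := volume) (s := Set.Ioc a b)
        measurableSet_Ioc |>.mp hae
      rw [MeasureTheory.ae_iff] at this
      convert this using 2
      ext u
      simp only [Set.mem_setOf_eq, Set.mem_Ioc]
      tauto
    have hroots : {u : ℝ | s.eval u = 0}.Finite := Polynomial.finite_setOf_isRoot hne
    have hsub : Set.Ioc a b ⊆ {u ∈ Set.Ioc a b | s.eval u * s.eval u ≠ 0}
        ∪ {u : ℝ | s.eval u = 0} := by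
      intro u hu
      by_cases h : s.eval u = 0
      · exact Or.inr h
      · exact Or.inl ⟨hu, mul_ne_zero h h⟩
    have hmeas : volume (Set.Ioc a b) = 0 := by
      refine le_antisymm ?_ zero_le
      calc volume (Set.Ioc a b)
          ≤ volume ({u ∈ Set.Ioc a b | s.eval u * s.eval u ≠ 0}
            ∪ {u : ℝ | s.eval u = 0}) := measure_mono hsub
        _ ≤ volume {u ∈ Set.Ioc a b | s.eval u * s.eval u ≠ 0}
            + volume {u : ℝ | s.eval u = 0} := measure_union_le _ _
        _ = 0 := by rw [hnull, hroots.measure_zero]; simp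
    rw [Real.volume_Ioc] at hmeas
    have : b - a ≤ 0 := by
      by_contra hpos
      push_neg at hpos
      rw [ENNReal.ofReal_eq_zero] at hmeas
      linarith
    linarith
  -- so r = q * c, vanishing at Gauss points
  intro i
  have : r.eval (t i) = q.eval (t i) * c.eval (t i) := by
    rw [hdecomp, hszero]; simp
  rw [hr] at this
  simp only [Polynomial.eval_sub] at this
  rw [htroot i, zero_mul] at this
  linarith
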